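/- (Margin equality) Assume the kernel k is unitary with respect to G and let w = Σ_{j=1}^N c_j Φ(x_j) for points x_j ∈ E and coefficients c_j ∈ ℝ. Then for every x ∈ E and every g ∈ G, ⟨Φ(x), w⟩ = ⟨φ(g x), w⟩; consequently, for any labels y_i ∈ {−1,+1}, the minimum of y_i⟨Φ(x_i), w⟩ over i equals the minimum of y_i⟨φ(g x_i), w⟩ over all i and all g ∈ G. -/

import Mathlib

open MeasureTheory RealInnerProductSpace

/-- Margin equality: for a unitary kernel and `w = Σ_j c_j Φ(x_j)`, one has
`⟪Φ x, w⟫ = ⟪φ (g x), w⟫` for every `x ∈ E` and `g ∈ G`; consequently, for any labels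
`y i ∈ {−1, +1}`, the minimum of `y i * ⟪Φ(xᵢ), w⟫` over `i` equals the minimum of
`y i * ⟪φ(g xᵢ), w⟫` over all `i` and all `g ∈ G`. -/
theorem margin_equality
    {E : Type*} [NormedAddCommGroup E] [InnerProductSpace ℝ E] [FiniteDimensional ℝ E]
    {G : Type*} [Group G] [TopologicalSpace G] [IsTopologicalGroup G] [CompactSpace G]
    [MeasurableSpace G] [BorelSpace G]
    (μ : Measure G) [IsProbabilityMeasure μ] [μ.IsMulLeftInvariant] [μ.IsMulRightInvariant]
    [μ.IsInvInvariant]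
    (ρ : G →* (E ≃ₗᵢ[ℝ] E)) (hρ : Continuous fun p : G × E => ρ p.1 p.2)
    {H : Type*} [NormedAddCommGroup H] [InnerProductSpace ℝ H] [CompleteSpace H]
    (φ : E → H) (hφ : Continuous φ)
    (hunitary : ∀ (g : G) (x y : E), ⟪φ (ρ g x), φ (ρ g y)⟫ = ⟪φ x, φ y⟫)
    (Φ : E → H) (hΦ : ∀ x : E, Φ x = ∫ g, φ (ρ g x) ∂μ)
    (N : ℕ) (xs : Fin N → E) (c : Fin N → ℝ) (w : H) (hw : w = ∑ j, c j • Φ (xs j)) :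
    (∀ (x : E) (g : G), ⟪Φ x, w⟫ = ⟪φ (ρ g x), w⟫) ∧
    (∀ y : Fin N → ℝ, (∀ i, y i = 1 ∨ y i = -1) →
      (⨅ i : Fin N, y i * ⟪Φ (xs i), w⟫) =
        ⨅ i : Fin N, ⨅ g : G, y i * ⟪φ (ρ g (xs i)), w⟫) := by
  have hcont : ∀ x : E, Continuous fun g : G => φ (ρ g x) := fun x =>
    hφ.comp (hρ.comp (Continuous.prodMk continuous_id continuous_const))
  have hint : ∀ x : E, Integrable (fun g : G => φ (ρ g x)) μ := fun x =>
    (hcont x).integrable_of_hasCompactSupport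
      (HasCompactSupport.of_compactSpace _)
  -- ⟪φ (ρ g x), Φ v⟫ = ⟪φ x, Φ v⟫
  have key : ∀ (x v : E) (g : G), ⟪φ (ρ g x), Φ v⟫ = ⟪φ x, Φ v⟫ := by
    intro x v g
    rw [hΦ v, ← integral_inner (hint v), ← integral_inner (hint v)]
    have h1 : ∀ h : G, ⟪φ (ρ g x), φ (ρ h v)⟫ = ⟪φ x, φ (ρ (g⁻¹ * h) v)⟫ := by
      intro h
      have := hunitary g⁻¹ (ρ g x) (ρ h v)
      simpa [← MonoidHom.map_mul, LinearIsometryEquiv.coe_one] using this.symm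
    simp_rw [h1]
    exact MeasureTheory.integral_mul_left_eq_self
      (fun h => ⟪φ x, φ (ρ h v)⟫) g⁻¹
  -- ⟪Φ x, Φ v⟫ = ⟪φ x, Φ v⟫
  have key2 : ∀ (x v : E), ⟪Φ x, Φ v⟫ = ⟪φ x, Φ v⟫ := by
    intro x v
    have : ⟪Φ v, Φ x⟫ = ∫ g, ⟪Φ v, φ (ρ g x)⟫ ∂μ := by
      rw [hΦ x, integral_inner (hint x)]
    rw [real_inner_comm, this]
    have : (fun g : G => ⟪Φ v, φ (ρ g x)⟫) = fun _ : G => ⟪φ x, Φ v⟫ := by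
      funext g
      rw [real_inner_comm, key x v g]
    rw [this, integral_const]
    simp
  have main : ∀ (x : E) (g : G), ⟪Φ x, w⟫ = ⟪φ (ρ g x), w⟫ := by
    intro x g
    subst hw
    simp_rw [inner_sum, real_inner_smul_right, key2, key]
  refine ⟨main, fun y _ => ?_⟩
  congr 1
  funext i
  have : (fun g : G => y i * ⟪φ (ρ g (xs i)), w⟫) = fun _ : G => y i * ⟪Φ (xs i), w⟫ := by
    funext g; rw [main (xs i) g]
  rw [this, ciInf_const]
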